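/- Let K be a graph-based cell complex of rank R ≥ 2 and let C be a connected component of a 2-cell of K. Then there exist vertices v_1, …, v_k with C = {v_1, …, v_k} such that the edges of K contained in C are exactly {v_i, v_{i+1}} for 1 ≤ i ≤ k−1 together with {v_k, v_1}; that is, the 1-skeleton restricted to C is a cycle. -/

import Mathlib

open scoped Classical

universe u v

/-- Underlying data of a combinatorial cell complex: a finite collection of
finite subsets of a vertex type `V` (the cells) together with a rank function. -/
structure Precc (V : Type u) where
  cells : Finset (Finset V)
  rk : Finset V → ℕ

namespace Precc

variable {V : Type u} [DecidableEq V] [Fintype V]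

/-- The axioms of a combinatorial cell complex (cc): cells are nonempty, every
vertex of a cell is a (rank 0) cell, rank-0 cells are exactly the singletons,
rank is strictly monotone, cells are closed under nonempty intersections, ranks
have no gaps, and the diamond property. -/
def IsCC (K : Precc V) : Prop :=
  (∀ x ∈ K.cells, x.Nonempty) ∧
  (∀ x ∈ K.cells, ∀ a ∈ x, ({a} : Finset V) ∈ K.cells) ∧
  (∀ x ∈ K.cells, (K.rk x = 0 ↔ x.card = 1)) ∧
  (∀ x ∈ K.cells, ∀ y ∈ K.cells, x ⊂ y → K.rk x < K.rk y) ∧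
  (∀ x ∈ K.cells, ∀ y ∈ K.cells, x ∩ y = ∅ ∨ x ∩ y ∈ K.cells) ∧
  (∀ x ∈ K.cells, ∀ y ∈ K.cells, x ⊂ y →
    ∃ z ∈ K.cells, x ⊂ z ∧ z ⊆ y ∧ K.rk z = K.rk x + 1) ∧
  (∀ x ∈ K.cells, ∀ y ∈ K.cells, x ⊆ y → K.rk y = K.rk x + 2 →
    ∃ z₁ ∈ K.cells, ∃ z₂ ∈ K.cells, z₁ ≠ z₂ ∧
      ∀ z ∈ K.cells, ((x ⊆ z ∧ z ⊆ y ∧ K.rk z = K.rk x + 1) ↔ (z = z₁ ∨ z = z₂)))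

/-- The set of cofaces of a cell. -/
noncomputable def cface (K : Precc V) (x : Finset V) : Finset (Finset V) :=
  K.cells.filter fun y => x ⊆ y ∧ K.rk y = K.rk x + 1

/-- The set of faces of a cell. -/
noncomputable def face (K : Precc V) (x : Finset V) : Finset (Finset V) :=
  K.cells.filter fun y => y ⊆ x ∧ K.rk y + 1 = K.rk x

/-- The rank (dimension) of the complex. -/
def Rk (K : Precc V) : ℕ := K.cells.sup K.rk

/-- The set of cells of a given rank. -/
noncomputable def cellsOfRank (K : Precc V) (r : ℕ) : Finset (Finset V) :=
  K.cells.filter fun x => K.rk x = r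

/-- The dual set of a set of vertices: the maximal cells containing it. -/
noncomputable def dualSet (K : Precc V) (A : Finset V) : Finset (Finset V) :=
  (K.cellsOfRank K.Rk).filter fun z => A ⊆ z

/-- A cc is pure if every maximal cell has maximal rank. -/
def Pure (K : Precc V) : Prop :=
  ∀ x ∈ K.cells, (∀ y ∈ K.cells, ¬ x ⊂ y) → K.rk x = K.Rk

/-- A cc is graph-based if every edge (1-cell) has exactly two vertices. -/
def GraphBased (K : Precc V) : Prop :=
  ∀ e ∈ K.cells, K.rk e = 1 → e.card = 2

/-- Non-branching: every sub-maximal cell lies in at most two maximal cells. -/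
def NonBranching (K : Precc V) : Prop :=
  ∀ y ∈ K.cells, K.rk y + 1 = K.Rk → (K.dualSet y).card ≤ 2

def NonSingular (K : Precc V) : Prop :=
  K.GraphBased ∧ K.Pure ∧ K.NonBranching

/-- Closed: non-singular and every sub-maximal cell lies in exactly two
maximal cells. -/
def Closed (K : Precc V) : Prop :=
  K.NonSingular ∧ ∀ y ∈ K.cells, K.rk y + 1 = K.Rk → (K.dualSet y).card = 2

/-- Cells of the boundary: cells contained in a sub-maximal cell lying in
exactly one maximal cell. -/
noncomputable def bdryCells (K : Precc V) : Finset (Finset V) :=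
  K.cells.filter fun x =>
    ∃ y ∈ K.cells, x ⊆ y ∧ K.rk y + 1 = K.Rk ∧ (K.dualSet y).card = 1

/-- The boundary complex. -/
noncomputable def boundary (K : Precc V) : Precc V :=
  ⟨K.bdryCells, K.rk⟩

/-- The dual complex of a (pure) cc, with rank of the dual cell of `x` equal
to `Rk K - rk x` (encoded intrinsically via the intersection of the dual set). -/
noncomputable def dual (K : Precc V) : Precc (Finset V) :=
  ⟨K.cells.image K.dualSet, fun A => K.Rk - K.rk (A.inf id)⟩

/-- The barycentric subdivision: cells are nonempty chains of cells of `K`. -/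
noncomputable def bdiv (K : Precc V) : Precc (Finset V) :=
  ⟨K.cells.powerset.filter fun c => c.Nonempty ∧ ∀ x ∈ c, ∀ y ∈ c, x ⊆ y ∨ y ⊆ x,
   fun c => c.card - 1⟩

/-- Isomorphism of (pre)cell complexes: a rank-preserving bijection between the
cell sets preserving and reflecting inclusions. -/
def IsIso {A : Type u} {B : Type v} (K : Precc A) (L : Precc B) : Prop :=
  ∃ f : Finset A → Finset B,
    Set.BijOn f ↑K.cells ↑L.cells ∧
    (∀ x ∈ K.cells, ∀ y ∈ K.cells, (x ⊆ y ↔ f x ⊆ f y)) ∧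
    (∀ x ∈ K.cells, L.rk (f x) = K.rk x)

/-- Adjacency of two vertices via an edge of `K`. -/
def EdgeRel (K : Precc V) (a b : V) : Prop :=
  ({a, b} : Finset V) ∈ K.cells ∧ K.rk ({a, b} : Finset V) = 1

/-- Connectedness of a cc: graph-based, and the 1-skeleton is connected. -/
def Connected (K : Precc V) : Prop :=
  K.GraphBased ∧ ∀ a b : V, ({a} : Finset V) ∈ K.cells → ({b} : Finset V) ∈ K.cells →
    Relation.ReflTransGen K.EdgeRel a b

/-- Cell-connectedness: the 1-skeleton of every cell is connected. -/
def CellConnected (K : Precc V) : Prop :=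
  K.GraphBased ∧ ∀ x ∈ K.cells, ∀ a ∈ x, ∀ b ∈ x,
    Relation.ReflTransGen (fun s t => s ∈ x ∧ t ∈ x ∧ K.EdgeRel s t) a b

/-- A local cc: connected and cell-connected. -/
def LocalCC (K : Precc V) : Prop := K.Connected ∧ K.CellConnected

/-- The vertex set of a cc. -/
noncomputable def vertices (K : Precc V) : Finset V :=
  Finset.univ.filter fun a => ({a} : Finset V) ∈ K.cells

/-- `J` is a sub-cell complex of `K`. -/
def Subcomplex (J K : Precc V) : Prop :=
  J.cells ⊆ K.cells ∧ ∀ x ∈ J.cells, J.rk x = K.rk x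

/-- The edges of `K` containing a given vertex. -/
noncomputable def EdgesAt (K : Precc V) (a : V) : Finset (Finset V) :=
  K.cells.filter fun e => K.rk e = 1 ∧ a ∈ e

/-- The edges of `K` at a vertex `a` that are contained in a cell `x`. -/
noncomputable def edgesIn (K : Precc V) (a : V) (x : Finset V) : Finset (Finset V) :=
  (K.EdgesAt a).filter fun e => e ⊆ x

/-- `r`-fullness: every set of `j` edges at a vertex (`2 ≤ j ≤ r`) is the set of
edges at that vertex of some `j`-cell. -/
def RFull (K : Precc V) (r : ℕ) : Prop :=
  ∀ a : V, ({a} : Finset V) ∈ K.cells → ∀ j : ℕ, 2 ≤ j → j ≤ r →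
    ∀ S ⊆ K.EdgesAt a, S.card = j →
      ∃ x ∈ K.cells, K.rk x = j ∧ K.edgesIn a x = S

/-- Fullness (= 2-fullness). -/
def Full (K : Precc V) : Prop := K.RFull 2

/-- `n`-regularity: every vertex lies in exactly `n` edges. -/
def Regular (K : Precc V) (n : ℕ) : Prop :=
  ∀ a ∈ K.vertices, (K.EdgesAt a).card = n

/-- `m`-edge-regularity: every edge lies in exactly `m` 2-cells. -/
def EdgeRegular (K : Precc V) (m : ℕ) : Prop :=
  ∀ e ∈ K.cells, K.rk e = 1 → ((K.cellsOfRank 2).filter fun C => e ⊆ C).card = m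

/-- Simplicial complex: every nonempty subset of a cell is a cell. -/
def Simplicial (K : Precc V) : Prop :=
  ∀ x ∈ K.cells, ∀ y : Finset V, y ⊆ x → y.Nonempty → y ∈ K.cells

/-- Adjacency in the dual graph: two distinct maximal cells meeting along an
interior sub-maximal cell. -/
def DualAdj (K : Precc V) (z z' : Finset V) : Prop :=
  z ∈ K.cellsOfRank K.Rk ∧ z' ∈ K.cellsOfRank K.Rk ∧ z ≠ z' ∧
  ∃ y ∈ K.cells, K.rk y + 1 = K.Rk ∧ y ⊆ z ∧ y ⊆ z' ∧ (K.dualSet y).card = 2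

/-- A pinch: a cell whose set of containing maximal cells induces a
disconnected subgraph of the dual graph. -/
def IsPinch (K : Precc V) (x : Finset V) : Prop :=
  ¬ ∀ z ∈ K.dualSet x, ∀ z' ∈ K.dualSet x,
      Relation.ReflTransGen
        (fun a b => a ∈ K.dualSet x ∧ b ∈ K.dualSet x ∧ K.DualAdj a b) z z'

/-- Non-pinching: no `K`-pinch and no `∂K`-pinch. -/
def NonPinching (K : Precc V) : Prop :=
  (∀ x ∈ K.cells, ¬ K.IsPinch x) ∧ (∀ x ∈ K.boundary.cells, ¬ K.boundary.IsPinch x)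

/-- The Euler characteristic. -/
noncomputable def chi (K : Precc V) : ℤ :=
  ∑ r ∈ Finset.range (K.Rk + 1), (-1 : ℤ) ^ r * ((K.cellsOfRank r).card : ℤ)

/-- Restriction of `K` to the cells contained in `A`. -/
noncomputable def restrict (K : Precc V) (A : Finset V) : Precc V :=
  ⟨K.cells.filter fun x => x ⊆ A, K.rk⟩

/-- A shelling of a (non-singular) cc: for rank 0 the trivial order on the one
point, for rank ≥ 1 a linear order of the facets such that the boundary of the
first facet has a shelling and each facet meets the previous ones in a
non-singular complex of rank one less that has a shelling completable into a
shelling of the boundary of the facet, with the boundary conditions of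
Definition 4.9 of the paper (see `IsShelling` below).
The intersection of the `k`-th facet with the union of the previous ones,
as a subcomplex of `K`. -/
noncomputable def interComplex (K : Precc V) (L : List (Finset V)) (k : ℕ)
    (hk : k < L.length) : Precc V :=
  K.restrict (L.get ⟨k, hk⟩ ∩ (L.take k).foldr (· ∪ ·) ∅)

set_option maxHeartbeats 1000000 in
inductive IsShelling : Precc V → List (Finset V) → Prop where
  | point (K : Precc V) (x : Finset V) (hx : K.cells = {x}) (h0 : K.rk x = 0) :
      IsShelling K [x]
  | step (K : Precc V) (L : List (Finset V)) (L₀ : List (Finset V))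
      (S S' : ℕ → List (Finset V))
      (hR : 1 ≤ K.Rk) (hnd : L.Nodup) (hne : L ≠ [])
      (henum : L.toFinset = K.cellsOfRank K.Rk)
      (hfirst : IsShelling ((K.restrict L.headI).boundary) L₀)
      (hS : ∀ (k : ℕ) (hk : k < L.length), 0 < k →
        IsShelling (K.interComplex L k hk) (S k))
      (hS' : ∀ (k : ℕ) (hk : k < L.length), 0 < k →
        IsShelling ((K.restrict (L.get ⟨k, hk⟩)).boundary) (S' k))
      (hpre : ∀ (k : ℕ), k < L.length → 0 < k → S k <+: S' k)
      (hns : ∀ (k : ℕ) (hk : k < L.length), 0 < k →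
        (K.interComplex L k hk).NonSingular ∧
        (K.interComplex L k hk).Rk + 1 = K.Rk ∧
        (k < L.length - 1 → (K.interComplex L k hk).bdryCells.Nonempty) ∧
        ((K.interComplex L k hk).bdryCells = ∅ →
          k = L.length - 1 ∧ K.Closed ∧
          (K.interComplex L k hk).cells = ((K.restrict (L.get ⟨k, hk⟩)).boundary).cells)) :
      IsShelling K L

/-- A shellable cc. -/
def Shellable (K : Precc V) : Prop :=
  K.NonSingular ∧ ∃ L : List (Finset V), IsShelling K L

/-- The connection relation: `∇^a_b e = f`, i.e. `f` is the edge at `b`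
associated to the edge `e` at `a` via the unique 2-cell containing `e` and the
edge `{a,b}` (and `{a,b}` is sent to itself). -/
def ConnRel (K : Precc V) (a b : V) (e f : Finset V) : Prop :=
  (e = ({a, b} : Finset V) ∧ f = ({a, b} : Finset V)) ∨
  (e ≠ ({a, b} : Finset V) ∧ f ≠ ({a, b} : Finset V) ∧
    e ∈ K.cells ∧ f ∈ K.cells ∧ K.rk e = 1 ∧ K.rk f = 1 ∧ a ∈ e ∧ b ∈ f ∧
    ∃ C ∈ K.cells, K.rk C = 2 ∧ e ⊆ C ∧ ({a, b} : Finset V) ⊆ C ∧ f ⊆ C)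

/-- `C` is a connected component of a 2-cell of `K`. -/
def IsComponentOfTwoCell (K : Precc V) (C : Finset V) : Prop :=
  ∃ C₀ ∈ K.cells, K.rk C₀ = 2 ∧ C ⊆ C₀ ∧ C.Nonempty ∧
    (∀ e ∈ K.cells, K.rk e = 1 → e ⊆ C₀ → (e ∩ C).Nonempty → e ⊆ C) ∧
    (∀ a ∈ C, ∀ b ∈ C,
      Relation.ReflTransGen (fun s t => s ∈ C ∧ t ∈ C ∧ K.EdgeRel s t) a b)

/-- `c` is a cyclic enumeration of the vertex set `C` along edges of `K`. -/
def IsCycleOf (K : Precc V) (C : Finset V) (c : List V) : Prop :=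
  c ≠ [] ∧ c.Nodup ∧ c.toFinset = C ∧
  ∀ a : V, c.head? = some a → List.Chain' K.EdgeRel (c ++ [a])

/-- A path in the 1-skeleton, recorded by its list of visited vertices. -/
def IsPathList (K : Precc V) (l : List V) : Prop :=
  l ≠ [] ∧ List.Chain' K.EdgeRel l

/-- Transport of edges along a path via the connection. -/
inductive Transport (K : Precc V) : List V → Finset V → Finset V → Prop where
  | single (a : V) (e : Finset V) : Transport K [a] e e
  | cons {a b : V} {l : List V} {e f g : Finset V} :
      ConnRel K a b e f → Transport K (b :: l) f g → Transport K (a :: b :: l) e g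

/-- `p` and `p'` are the two complementary arcs of the boundary cycle of the
2-cell component `C`, with the same endpoints. -/
def ComplementaryArcs (K : Precc V) (C : Finset V) (p p' : List V) : Prop :=
  p ≠ [] ∧ p' ≠ [] ∧ p.head? = p'.head? ∧ p.getLast? = p'.getLast? ∧ p.Nodup ∧
  ∃ c : List V, IsCycleOf K C c ∧ ∃ a : V, c.head? = some a ∧
    (p ++ p'.reverse.tail = c ++ [a] ∨ p' ++ p.reverse.tail = c ++ [a])

/-- Elementary moves of paths: an edge move (deleting a back-and-forth along an
edge) and a 2-cell move (replacing an arc of a 2-cell component by the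
complementary arc). -/
inductive Move (K : Precc V) : List V → List V → Prop where
  | edgeDel (a b : List V) (u w : V) (h : K.EdgeRel u w) :
      Move K (a ++ u :: w :: u :: b) (a ++ u :: b)
  | cellMove (a b p p' : List V) (C : Finset V)
      (hC : K.IsComponentOfTwoCell C) (harc : K.ComplementaryArcs C p p') :
      Move K (a ++ p ++ b) (a ++ p' ++ b)

/-- Homotopy of paths: generated by finitely many moves (and their inverses). -/
def Homotopic (K : Precc V) (p q : List V) : Prop :=
  Relation.ReflTransGen (fun l l' => Move K l l' ∨ Move K l' l) p q

/-- Monodromy-freedom: the holonomy of the connection around the boundary loop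
of any connected component of a 2-cell is the identity on the incident edges. -/
def MonodromyFree (K : Precc V) : Prop :=
  ∀ C : Finset V, K.IsComponentOfTwoCell C → ∀ c : List V, K.IsCycleOf C c →
    ∀ a : V, c.head? = some a →
      ∀ e f : Finset V, e ∈ K.cells → K.rk e = 1 → e ∩ C = {a} →
        Transport K (c ++ [a]) e f → f = e

/-- Evenness: every connected component of every 2-cell has an even number of
vertices. -/
def EvenCC (K : Precc V) : Prop :=
  ∀ C : Finset V, K.IsComponentOfTwoCell C → Even C.card

/-- The collar of a vertex set `A` in `K`: cells meeting `A` properly. -/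
noncomputable def collarCells (K : Precc V) (A : Finset V) : Finset (Finset V) :=
  K.cells.filter fun x => (x ∩ A).Nonempty ∧ ¬ x ⊆ A

/-- The set `E^x_A` of edges of `x` with exactly one vertex in `A`. -/
noncomputable def edgeCollar (K : Precc V) (A : Finset V) (x : Finset V) : Finset (Finset V) :=
  K.cells.filter fun e => K.rk e = 1 ∧ e ⊆ x ∧ (e ∩ A).card = 1

/-- The `∼`-dual of a cell: the union of its dual in `K` and its dual in `∂K`. -/
noncomputable def bdualSet (K : Precc V) (x : Finset V) : Finset (Finset V) :=
  K.dualSet x ∪ (K.boundary.cells.filter fun y => K.rk y + 1 = K.Rk ∧ x ⊆ y)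

/-- `J` is a (possibly empty) union of connected components of `K`. -/
def IsUnionOfComponents (K J : Precc V) : Prop :=
  ∃ W : Finset V, W ⊆ K.vertices ∧
    (∀ a ∈ W, ∀ b : V, Relation.ReflTransGen K.EdgeRel a b → b ∈ W) ∧
    J.cells = K.cells.filter fun x => x ⊆ W

/-- `g` is the greatest lower bound of `S` among the cells of `K`. -/
def IsMeetOf (K : Precc V) (S : Finset (Finset V)) (g : Finset V) : Prop :=
  g ∈ K.cells ∧ (∀ s ∈ S, g ⊆ s) ∧ ∀ b ∈ K.cells, (∀ s ∈ S, b ⊆ s) → b ⊆ g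

/-- `g` is the least upper bound of `S` among the cells of `K`. -/
def IsJoinOf (K : Precc V) (S : Finset (Finset V)) (g : Finset V) : Prop :=
  g ∈ K.cells ∧ (∀ s ∈ S, s ⊆ g) ∧ ∀ b ∈ K.cells, (∀ s ∈ S, s ⊆ b) → g ⊆ b

/-- A reduction `ρ : J → K` (so that `J` is a subdivision of `K`). -/
def IsReduction (J K : Precc V) (ρ : Finset V → Finset V) : Prop :=
  (∀ x ∈ J.cells, ρ x ∈ K.cells) ∧
  (∀ y ∈ K.cells, ∃ x ∈ J.cells, ρ x = y) ∧
  (∀ x ∈ J.cells, ∀ y ∈ J.cells, x ⊆ y → ρ x ⊆ ρ y) ∧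
  (∀ x ∈ J.cells, ∀ y ∈ J.cells, K.rk (ρ x) = 0 → ρ x = ρ y → x = y) ∧
  (∀ x ∈ J.cells, ∀ g : Finset V, IsMeetOf J (J.cface x) g →
    ∀ h : Finset V, IsMeetOf K ((J.cface x).image ρ) h → ρ g = h) ∧
  (∀ x ∈ J.cells, ∀ y ∈ K.cells, ρ x ⊆ y →
    ∃ w ∈ J.cells, x ⊆ w ∧ J.rk w = K.rk y ∧ ρ w = y) ∧
  (∀ x ∈ J.cells, J.rk x + 1 = K.rk (ρ x) →
    ((J.cface x).filter fun w => ρ w = ρ x).card = 2) ∧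
  (∀ x ∈ J.cells, J.rk x = K.rk (ρ x) →
    ∀ y ∈ K.cface (ρ x), ((J.cface x).filter fun w => ρ w = y).card = 1)

/-- A collapse `π : J → K` (so that `J` is an expansion of `K`). -/
def IsCollapse (J K : Precc V) (π : Finset V → Finset V) : Prop :=
  (∀ x ∈ J.cells, π x ∈ K.cells) ∧
  (∀ y ∈ K.cells, ∃ x ∈ J.cells, π x = y) ∧
  (∀ x ∈ J.cells, ∀ y ∈ J.cells, x ⊆ y → π x ⊆ π y) ∧
  (∀ x ∈ J.cells, ∀ y ∈ J.cells, (∀ z ∈ K.cells, ¬ π x ⊂ z) → π x = π y → x = y) ∧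
  (∀ x ∈ J.cells, 1 ≤ J.rk x → IsJoinOf K ((J.face x).image π) (π x)) ∧
  (∀ x ∈ J.cells, ∀ y ∈ K.cells, y ⊆ π x →
    ∃ w ∈ J.cells, w ⊆ x ∧ J.rk w = K.rk y ∧ π w = y) ∧
  (∀ x ∈ J.cells, K.rk (π x) + 1 = J.rk x →
    ((J.face x).filter fun w => π w = π x).card = 2) ∧
  (∀ x ∈ J.cells, J.rk x = K.rk (π x) →
    ∀ y ∈ K.face (π x), ((J.face x).filter fun w => π w = y).card = 1)

/-- The domain `E_a^{dual b}` of the connection `∇^a_b`: edges at `a` lying in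
a common 2-cell with the edge `{a,b}`. -/
noncomputable def connDomain (K : Precc V) (a b : V) : Finset (Finset V) :=
  (K.EdgesAt a).filter fun e =>
    ∃ C ∈ K.cells, K.rk C = 2 ∧ e ⊆ C ∧ ({a, b} : Finset V) ⊆ C

end Precc

namespace Precc

variable {V : Type u} [DecidableEq V] [Fintype V]


private lemma pair_of_card_two_aux {V : Type u} [DecidableEq V] {z : Finset V}
    (hz : z.card = 2) {a : V} (ha : a ∈ z) : ∃ b, b ≠ a ∧ z = {a, b} := by
  obtain ⟨x, y, hxy, rfl⟩ := Finset.card_eq_two.mp hz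
  rcases Finset.mem_insert.mp ha with rfl | h
  · exact ⟨y, fun h => hxy h.symm, rfl⟩
  · rw [Finset.mem_singleton] at h
    subst h
    exact ⟨x, fun h => hxy h, Finset.pair_comm x a⟩

private lemma exists_cyclic_enum_aux {V : Type u} [DecidableEq V] [Fintype V]
    (C : Finset V) (E : V → V → Prop)
    (hsym : ∀ a b, E a b → E b a)
    (hmem : ∀ a b, E a b → a ∈ C ∧ b ∈ C ∧ a ≠ b)
    (hdeg : ∀ a ∈ C, ∃ b₁ b₂, b₁ ≠ b₂ ∧ E a b₁ ∧ E a b₂ ∧ ∀ b, E a b → b = b₁ ∨ b = b₂)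
    (hne : C.Nonempty)
    (hconn : ∀ a ∈ C, ∀ b ∈ C, Relation.ReflTransGen E a b) :
    ∃ (k : ℕ) (hk : 0 < k) (w : Fin k → V),
      Function.Injective w ∧
      (∀ a : V, a ∈ C ↔ ∃ i, w i = a) ∧
      (∀ i : Fin k, E (w i) (w ⟨(i.1 + 1) % k, Nat.mod_lt _ hk⟩)) ∧
      (∀ i : Fin k, ∀ b, E (w i) b →
        b = w ⟨(i.1 + 1) % k, Nat.mod_lt _ hk⟩ ∨ b = w ⟨(i.1 + k - 1) % k, Nat.mod_lt _ hk⟩) := by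
  classical
  obtain ⟨a0, ha0⟩ := hne
  set P : List V → Prop := fun l => l ≠ [] ∧ l.Nodup ∧ l.Chain' E ∧ ∀ x ∈ l, x ∈ C with hPdef
  have hP1 : P [a0] := ⟨by simp, by simp, List.isChain_singleton .., by simpa⟩
  have hbound : ∀ l, P l → l.length ≤ Fintype.card V := fun l hl => hl.2.1.length_le_card
  set Q : ℕ → Prop := fun m => ∃ l, P l ∧ l.length = m with hQdef
  have hQ1 : Q 1 := ⟨[a0], hP1, rfl⟩
  have hcard1 : 1 ≤ Fintype.card V := Fintype.card_pos_iff.mpr ⟨a0⟩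
  have hQm : Q (Nat.findGreatest Q (Fintype.card V)) := Nat.findGreatest_spec hcard1 hQ1
  obtain ⟨l, hPl, hlen⟩ := hQm
  have hmax : ∀ l', P l' → l'.length ≤ l.length := by
    intro l' hl'
    by_contra hgt
    exact Nat.findGreatest_is_greatest (P := Q) (by omega) (hbound l' hl') ⟨l', hl', rfl⟩
  obtain ⟨hlne, hnd, hch, hlC⟩ := hPl
  set n := l.length with hn
  have hn1 : 0 < n := List.length_pos_iff.mpr hlne
  have hget : ∀ {i j : Fin n}, l.get i = l.get j → i = j := fun h => (hnd.get_inj_iff).mp h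
  have getinj : ∀ (i j : ℕ) (hi : i < n) (hj : j < n), l.get ⟨i, hi⟩ = l.get ⟨j, hj⟩ → i = j :=
    fun i j hi hj h => congrArg Fin.val (hget h)
  have geq : ∀ (i j : ℕ) (hi : i < n) (hj : j < n), i = j → l.get ⟨i, hi⟩ = l.get ⟨j, hj⟩ := by
    intro i j hi hj h; subst h; rfl
  have Econv : ∀ {x x' y y' : V}, x = x' → y = y' → E x y → E x' y' := by
    rintro x _ y _ rfl rfl h; exact h
  have hchain : ∀ (i : ℕ) (h : i + 1 < n), E (l.get ⟨i, by omega⟩) (l.get ⟨i + 1, h⟩) := by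
    intro i h
    exact List.isChain_iff_getElem.mp hch i h
  have hgetC : ∀ (i : ℕ) (hi : i < n), l.get ⟨i, hi⟩ ∈ C := fun i hi => hlC _ (l.get_mem _)
  have hlastC : l.getLast hlne = l.get ⟨n - 1, by omega⟩ := by rw [List.getLast_eq_getElem hlne]; rfl
  -- maximality: neighbors of the last vertex are in l
  have hext : ∀ b, E (l.get ⟨n - 1, by omega⟩) b → b ∈ l := by
    intro b hb
    by_contra hbl
    have hPl' : P (l ++ [b]) := by
      refine ⟨by simp, ?_, ?_, ?_⟩
      · rw [List.nodup_append]
        refine ⟨hnd, List.nodup_singleton b, ?_⟩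
        intro a hal c hab heq
        simp only [List.mem_singleton] at hab
        subst hab; subst heq; exact hbl hal
      · refine List.isChain_append.mpr ?_
        refine ⟨hch, List.isChain_singleton b, ?_⟩
        intro x hx y hy
        rw [List.getLast?_eq_getLast hlne] at hx
        simp only [Option.mem_some_iff, List.head?_cons] at hx hy
        subst hx; subst hy
        rw [hlastC]; exact hb
      · intro x hx
        rcases List.mem_append.mp hx with h | h
        · exact hlC x h
        · simp only [List.mem_singleton] at h; subst h; exact (hmem _ _ hb).2.1
    have := hmax _ hPl'
    rw [List.length_append] at this
    simp at this; omega
  -- exactly-two-neighbors characterization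
  have pairchar : ∀ a c₁ c₂, c₁ ≠ c₂ → E a c₁ → E a c₂ → ∀ b, E a b → b = c₁ ∨ b = c₂ := by
    intro a c₁ c₂ h12 h1 h2 b hb
    obtain ⟨e₁, e₂, he, _, _, hu⟩ := hdeg a (hmem _ _ h1).1
    rcases hu _ h1 with rfl | rfl <;> rcases hu _ h2 with rfl | rfl <;>
      rcases hu _ hb with rfl | rfl <;> tauto
  obtain ⟨b₁, b₂, hb12, hE1, hE2, huniq⟩ :=
    hdeg (l.get ⟨n - 1, by omega⟩) (hgetC _ _)
  obtain ⟨i₁, hi₁⟩ := List.mem_iff_get.mp (hext _ hE1)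
  obtain ⟨i₂, hi₂⟩ := List.mem_iff_get.mp (hext _ hE2)
  have hn3 : 3 ≤ n := by
    have h1 : i₁.1 ≠ n - 1 := fun h =>
      (hmem _ _ hE1).2.2 ((geq (n-1) i₁.1 (by omega) i₁.2 h.symm).trans hi₁)
    have h2 : i₂.1 ≠ n - 1 := fun h =>
      (hmem _ _ hE2).2.2 ((geq (n-1) i₂.1 (by omega) i₂.2 h.symm).trans hi₂)
    have h3 : i₁.1 ≠ i₂.1 := fun h =>
      hb12 (hi₁.symm.trans ((geq i₁.1 i₂.1 i₁.2 i₂.2 h).trans hi₂))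
    have := i₁.2
    have := i₂.2
    omega
  -- the second neighbor of the last vertex is the head
  have hub : ∀ c, E (l.get ⟨n - 1, by omega⟩) c →
      c = l.get ⟨n - 2, by omega⟩ ∨ c = l.get ⟨0, by omega⟩ := by
    intro c hEc
    obtain ⟨j, hj⟩ := List.mem_iff_get.mp (hext _ hEc)
    have hjval : j.1 < n := j.2
    by_cases hj0 : j.1 = 0
    · right; rw [← hj]; exact geq j.1 0 j.2 (by omega) hj0
    by_cases hjn2 : j.1 = n - 2
    · left; rw [← hj]; exact geq j.1 (n-2) j.2 (by omega) hjn2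
    exfalso
    have hjn1 : j.1 ≠ n - 1 := fun h =>
      (hmem _ _ hEc).2.2 ((geq (n-1) j.1 (by omega) j.2 h.symm).trans hj)
    -- so 1 ≤ j.1 ≤ n - 3; the vertex l.get j has three distinct neighbors
    have hx1 : E (l.get ⟨j.1, j.2⟩) (l.get ⟨j.1 - 1, by omega⟩) := by
      refine hsym _ _ (Econv rfl (geq (j.1 - 1 + 1) j.1 (by omega) j.2 (by omega)) ?_)
      exact hchain (j.1 - 1) (by omega)
    have hx2 : E (l.get ⟨j.1, j.2⟩) (l.get ⟨j.1 + 1, by omega⟩) := hchain j.1 (by omega)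
    have hx3 : E (l.get ⟨j.1, j.2⟩) (l.get ⟨n - 1, by omega⟩) := by
      refine hsym _ _ (Econv rfl ?_ hEc)
      exact hj.symm
    have hne12 : l.get ⟨j.1 - 1, by omega⟩ ≠ l.get ⟨j.1 + 1, by omega⟩ := fun h => by
      have := getinj _ _ _ _ h; omega
    rcases pairchar _ _ _ hne12 hx1 hx2 _ hx3 with h | h
    · have := getinj _ _ _ _ h; omega
    · have := getinj _ _ _ _ h; omega
  have hprevE : E (l.get ⟨n - 1, by omega⟩) (l.get ⟨n - 2, by omega⟩) := by
    refine hsym _ _ (Econv rfl (geq (n-2+1) (n-1) (by omega) (by omega) (by omega)) ?_)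
    exact hchain (n - 2) (by omega)
  have hclose : E (l.get ⟨n - 1, by omega⟩) (l.get ⟨0, by omega⟩) := by
    rcases hub b₁ hE1 with h1 | h1 <;> rcases hub b₂ hE2 with h2 | h2
    · exact absurd (h1.trans h2.symm) hb12
    · exact h2 ▸ hE2
    · exact h1 ▸ hE1
    · exact absurd (h1.trans h2.symm) hb12
  -- full cyclic neighbor characterization
  have hnbr : ∀ (i : ℕ) (hi : i < n), ∀ b, E (l.get ⟨i, hi⟩) b →
      b = l.get ⟨(i + 1) % n, Nat.mod_lt _ hn1⟩ ∨
      b = l.get ⟨(i + n - 1) % n, Nat.mod_lt _ hn1⟩ := by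
    intro i hi b hb
    by_cases hi0 : i = 0
    · subst hi0
      have m1 : (0 + 1) % n = 1 := Nat.mod_eq_of_lt (by omega)
      have m2 : (0 + n - 1) % n = n - 1 := by
        rw [show 0 + n - 1 = n - 1 from by omega]; exact Nat.mod_eq_of_lt (by omega)
      have e1 : E (l.get ⟨0, hi⟩) (l.get ⟨1, by omega⟩) := hchain 0 (by omega)
      have e2 : E (l.get ⟨0, hi⟩) (l.get ⟨n - 1, by omega⟩) := hsym _ _ hclose
      have hne' : l.get ⟨1, by omega⟩ ≠ l.get ⟨n - 1, (by omega : n - 1 < n)⟩ := fun h => by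
        have := getinj _ _ _ _ h; omega
      rcases pairchar _ _ _ hne' e1 e2 b hb with h | h
      · left; exact h.trans (geq 1 _ (by omega) _ m1.symm)
      · right; exact h.trans (geq (n-1) _ (by omega) _ m2.symm)
    by_cases hin1 : i = n - 1
    · have m1 : (i + 1) % n = 0 := by
        rw [show i + 1 = n from by omega, Nat.mod_self]
      have m2 : (i + n - 1) % n = n - 2 := by
        rw [show i + n - 1 = (n - 2) + n from by omega, Nat.add_mod_right]
        exact Nat.mod_eq_of_lt (by omega)
      have e1 : E (l.get ⟨i, hi⟩) (l.get ⟨0, by omega⟩) :=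
        Econv (geq (n-1) i (by omega) hi (by omega)) rfl hclose
      have e2 : E (l.get ⟨i, hi⟩) (l.get ⟨n - 2, by omega⟩) :=
        Econv (geq (n-1) i (by omega) hi (by omega)) rfl hprevE
      have hne' : l.get ⟨0, (by omega : 0 < n)⟩ ≠ l.get ⟨n - 2, (by omega : n - 2 < n)⟩ := fun h => by
        have := getinj _ _ _ _ h; omega
      rcases pairchar _ _ _ hne' e1 e2 b hb with h | h
      · left; exact h.trans (geq 0 _ (by omega) _ m1.symm)
      · right; exact h.trans (geq (n-2) _ (by omega) _ m2.symm)
    -- interior vertex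
    have m1 : (i + 1) % n = i + 1 := Nat.mod_eq_of_lt (by omega)
    have m2 : (i + n - 1) % n = i - 1 := by
      rw [show i + n - 1 = (i - 1) + n from by omega, Nat.add_mod_right]
      exact Nat.mod_eq_of_lt (by omega)
    have e1 : E (l.get ⟨i, hi⟩) (l.get ⟨i + 1, by omega⟩) := hchain i (by omega)
    have e2 : E (l.get ⟨i, hi⟩) (l.get ⟨i - 1, by omega⟩) := by
      refine hsym _ _ (Econv rfl (geq (i - 1 + 1) i (by omega) hi (by omega)) ?_)
      exact hchain (i - 1) (by omega)
    have hne' : l.get ⟨i + 1, (by omega : i + 1 < n)⟩ ≠ l.get ⟨i - 1, (by omega : i - 1 < n)⟩ := fun h => by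
      have := getinj _ _ _ _ h; omega
    rcases pairchar _ _ _ hne' e1 e2 b hb with h | h
    · left; exact h.trans (geq (i+1) _ (by omega) _ m1.symm)
    · right; exact h.trans (geq (i-1) _ (by omega) _ m2.symm)
  have hforward : ∀ (i : ℕ) (hi : i < n),
      E (l.get ⟨i, hi⟩) (l.get ⟨(i + 1) % n, Nat.mod_lt _ hn1⟩) := by
    intro i hi
    by_cases h : i + 1 < n
    · exact Econv rfl (geq (i+1) _ h _ (Nat.mod_eq_of_lt h).symm) (hchain i h)
    · have m1 : (i + 1) % n = 0 := by
        rw [show i + 1 = n from by omega, Nat.mod_self]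
      exact Econv (geq (n-1) i (by omega) hi (by omega)) (geq 0 _ (by omega) _ m1.symm) hclose
  -- coverage
  have hcov : ∀ c ∈ C, c ∈ l := by
    intro c hc
    have hrt := hconn _ (hgetC 0 (by omega)) _ hc
    clear hc
    induction hrt with
    | refl => exact l.get_mem _
    | tail _ h2 ih =>
      obtain ⟨j, hj⟩ := List.mem_iff_get.mp ih
      subst hj
      rcases hnbr j.1 j.2 _ h2 with h | h
      · rw [h]; exact l.get_mem _
      · rw [h]; exact l.get_mem _
  refine ⟨n, hn1, fun i => l.get i, ?_, ?_, ?_, ?_⟩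
  · intro i j h; exact hget h
  · intro a
    constructor
    · intro ha; exact List.mem_iff_get.mp (hcov a ha)
    · rintro ⟨i, rfl⟩; exact hgetC i.1 i.2
  · intro i; exact hforward i.1 i.2
  · intro i b hb; exact hnbr i.1 i.2 b hb

/-- In a graph-based cc of rank `≥ 2`, every connected
component `C` of a 2-cell `C₀` admits a cyclic enumeration of its vertices
whose consecutive pairs are exactly the edges of `K` contained in `C`. -/
theorem statement_3 (K : Precc V) (hK : K.IsCC) (hgb : K.GraphBased)
    (hR : 2 ≤ K.Rk)
    (C₀ : Finset V) (hC₀ : C₀ ∈ K.cells) (hrk2 : K.rk C₀ = 2)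
    (C : Finset V) (hCsub : C ⊆ C₀) (hCne : C.Nonempty)
    (hclosed : ∀ e ∈ K.cells, K.rk e = 1 → e ⊆ C₀ → (e ∩ C).Nonempty → e ⊆ C)
    (hconn : ∀ a ∈ C, ∀ b ∈ C, Relation.ReflTransGen
        (fun s t => s ∈ C ∧ t ∈ C ∧ K.EdgeRel s t) a b) :
    ∃ (k : ℕ) (hk : 0 < k) (w : Fin k → V),
      Function.Injective w ∧
      (∀ a : V, a ∈ C ↔ ∃ i, w i = a) ∧
      (∀ e ∈ K.cells, ((K.rk e = 1 ∧ e ⊆ C) ↔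
        ∃ i : Fin k, e = ({w i, w ⟨(i.1 + 1) % k, Nat.mod_lt _ hk⟩} : Finset V))) := by
  classical
  obtain ⟨hne', hvert, hrk0, hmono, hinter, hgap, hdia⟩ := hK
  set Erel : V → V → Prop := fun a b =>
    a ≠ b ∧ a ∈ C ∧ b ∈ C ∧ ({a, b} : Finset V) ∈ K.cells ∧ K.rk {a, b} = 1 with hErel
  have hsym : ∀ a b, Erel a b → Erel b a := by
    rintro a b ⟨h1, h2, h3, h4, h5⟩
    rw [Finset.pair_comm a b] at h4 h5
    exact ⟨h1.symm, h3, h2, h4, h5⟩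
  have hmemE : ∀ a b, Erel a b → a ∈ C ∧ b ∈ C ∧ a ≠ b := fun a b h => ⟨h.2.1, h.2.2.1, h.1⟩
  have hdeg : ∀ a ∈ C, ∃ b₁ b₂, b₁ ≠ b₂ ∧ Erel a b₁ ∧ Erel a b₂ ∧
      ∀ b, Erel a b → b = b₁ ∨ b = b₂ := by
    intro a ha
    have haC₀ : a ∈ C₀ := hCsub ha
    have hsa : ({a} : Finset V) ∈ K.cells := hvert C₀ hC₀ a haC₀
    have hr0 : K.rk {a} = 0 := (hrk0 _ hsa).mpr (Finset.card_singleton a)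
    obtain ⟨z₁, hz₁, z₂, hz₂, hz12, hiff⟩ :=
      hdia {a} hsa C₀ hC₀ (Finset.singleton_subset_iff.mpr haC₀) (by rw [hr0, hrk2])
    obtain ⟨hsub₁, hzc₁, hrkz₁'⟩ := (hiff z₁ hz₁).mpr (Or.inl rfl)
    obtain ⟨hsub₂, hzc₂, hrkz₂'⟩ := (hiff z₂ hz₂).mpr (Or.inr rfl)
    have hrkz₁ : K.rk z₁ = 1 := by rw [hrkz₁', hr0]
    have hrkz₂ : K.rk z₂ = 1 := by rw [hrkz₂', hr0]
    have ha₁ : a ∈ z₁ := Finset.singleton_subset_iff.mp hsub₁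
    have ha₂ : a ∈ z₂ := Finset.singleton_subset_iff.mp hsub₂
    have hC₁ : z₁ ⊆ C := hclosed z₁ hz₁ hrkz₁ hzc₁ ⟨a, Finset.mem_inter.mpr ⟨ha₁, ha⟩⟩
    have hC₂ : z₂ ⊆ C := hclosed z₂ hz₂ hrkz₂ hzc₂ ⟨a, Finset.mem_inter.mpr ⟨ha₂, ha⟩⟩
    obtain ⟨b₁, hb₁ne, hz₁eq⟩ := pair_of_card_two_aux (hgb z₁ hz₁ hrkz₁) ha₁
    obtain ⟨b₂, hb₂ne, hz₂eq⟩ := pair_of_card_two_aux (hgb z₂ hz₂ hrkz₂) ha₂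
    refine ⟨b₁, b₂, ?_, ?_, ?_, ?_⟩
    · intro h; exact hz12 (by rw [hz₁eq, hz₂eq, h])
    · exact ⟨Ne.symm hb₁ne, ha, hC₁ (by rw [hz₁eq]; simp),
        by rw [← hz₁eq]; exact hz₁, by rw [← hz₁eq]; exact hrkz₁⟩
    · exact ⟨Ne.symm hb₂ne, ha, hC₂ (by rw [hz₂eq]; simp),
        by rw [← hz₂eq]; exact hz₂, by rw [← hz₂eq]; exact hrkz₂⟩
    · rintro b ⟨hab, -, hbC, hcell, hrk1⟩
      have hsubC₀ : ({a, b} : Finset V) ⊆ C₀ :=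
        Finset.insert_subset haC₀ (Finset.singleton_subset_iff.mpr (hCsub hbC))
      rcases (hiff _ hcell).mp
          ⟨Finset.singleton_subset_iff.mpr (Finset.mem_insert_self a {b}), hsubC₀, by rw [hrk1, hr0]⟩ with h | h
      · left
        have hb : b ∈ ({a, b₁} : Finset V) := by
          rw [← hz₁eq, ← h]; simp
        rcases Finset.mem_insert.mp hb with h' | h'
        · exact absurd h' (Ne.symm hab)
        · exact Finset.mem_singleton.mp h'
      · right
        have hb : b ∈ ({a, b₂} : Finset V) := by
          rw [← hz₂eq, ← h]; simp
        rcases Finset.mem_insert.mp hb with h' | h'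
        · exact absurd h' (Ne.symm hab)
        · exact Finset.mem_singleton.mp h'
  have hconnE : ∀ a ∈ C, ∀ b ∈ C, Relation.ReflTransGen Erel a b := by
    intro a ha b hb
    refine Relation.ReflTransGen.mono ?_ _ _ (hconn a ha b hb)
    rintro s t ⟨hs, ht, hcell, hrk1⟩
    refine ⟨?_, hs, ht, hcell, hrk1⟩
    rintro rfl
    have hpair : ({s, s} : Finset V) = {s} := by simp
    rw [hpair] at hcell hrk1
    have h0 := (hrk0 _ hcell).mpr (Finset.card_singleton s)
    omega
  obtain ⟨k, hk, w, hwinj, hwcov, hwE, hwnbr⟩ :=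
    exists_cyclic_enum_aux C Erel hsym hmemE hdeg hCne hconnE
  refine ⟨k, hk, w, hwinj, hwcov, ?_⟩
  intro e he
  constructor
  · rintro ⟨hrk1, heC⟩
    obtain ⟨a, b, hab, rfl⟩ := Finset.card_eq_two.mp (hgb e he hrk1)
    have haC : a ∈ C := heC (by simp)
    have hbC : b ∈ C := heC (by simp)
    have hEab : Erel a b := ⟨hab, haC, hbC, he, hrk1⟩
    obtain ⟨i, rfl⟩ := (hwcov a).mp haC
    rcases hwnbr i b hEab with rfl | rfl
    · exact ⟨i, rfl⟩
    · refine ⟨⟨(i.1 + k - 1) % k, Nat.mod_lt _ hk⟩, ?_⟩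
      have hidx : ((i.1 + k - 1) % k + 1) % k = i.1 := by
        rw [Nat.mod_add_mod, show i.1 + k - 1 + 1 = i.1 + k from by omega,
          Nat.add_mod_right, Nat.mod_eq_of_lt i.2]
      have h1 : w ⟨((i.1 + k - 1) % k + 1) % k, Nat.mod_lt _ hk⟩ = w i :=
        congrArg w (Fin.ext hidx)
      show ({w i, w ⟨(i.1 + k - 1) % k, Nat.mod_lt _ hk⟩} : Finset V) =
        {w ⟨(i.1 + k - 1) % k, Nat.mod_lt _ hk⟩,
          w ⟨((i.1 + k - 1) % k + 1) % k, Nat.mod_lt _ hk⟩}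
      rw [h1, Finset.pair_comm]
  · rintro ⟨i, rfl⟩
    obtain ⟨-, hC1, hC2, -, hrk1⟩ := hwE i
    exact ⟨hrk1, Finset.insert_subset hC1 (Finset.singleton_subset_iff.mpr hC2)⟩

end Precc
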